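/- Let Y be a Banach space and A ⊆ Y a nonempty closed convex cone with A ≠ Y. Then the oriented distance function D_A is nonincreasing with respect to the cone order: if y₁ − y₂ ∈ A then D_A(y₁) ≤ D_A(y₂); moreover if A has nonempty interior and y₁ − y₂ ∈ int A, then D_A(y₁) < D_A(y₂). -/
import Mathlib

private lemma le_infDist_aux {Y : Type*} [MetricSpace Y] {s : Set Y} (hs : s.Nonempty)
    {x : Y} {b : ℝ} (h : ∀ y ∈ s, b ≤ dist x y) : b ≤ Metric.infDist x s := by
  by_contra hlt
  push_neg at hlt
  obtain ⟨y, hy, hd⟩ := (Metric.infDist_lt_iff hs).1 hlt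
  exact absurd (h y hy) (not_le.2 hd)

/-- For a nonempty closed convex cone `A ≠ Y`, the oriented distance `D_A` is
nonincreasing w.r.t. the cone order; strictly if the difference lies in the interior. -/
theorem orientedDist_antitone
    {Y : Type*} [NormedAddCommGroup Y] [NormedSpace ℝ Y] [CompleteSpace Y]
    (A : Set Y) (hne : A.Nonempty) (hAclosed : IsClosed A) (hAconv : Convex ℝ A)
    (hAcone : ∀ t : ℝ, 0 ≤ t → ∀ y ∈ A, t • y ∈ A) (hAne : A ≠ Set.univ) :
    (∀ y₁ y₂ : Y, y₁ - y₂ ∈ A →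
      Metric.infDist y₁ A - Metric.infDist y₁ Aᶜ ≤
        Metric.infDist y₂ A - Metric.infDist y₂ Aᶜ) ∧
    ((interior A).Nonempty → ∀ y₁ y₂ : Y, y₁ - y₂ ∈ interior A →
      Metric.infDist y₁ A - Metric.infDist y₁ Aᶜ <
        Metric.infDist y₂ A - Metric.infDist y₂ Aᶜ) := by
  -- A is closed under addition
  have hadd : ∀ a ∈ A, ∀ b ∈ A, a + b ∈ A := by
    intro a ha b hb
    have h2 : (1/2 : ℝ) • a + (1/2 : ℝ) • b ∈ A :=
      hAconv ha hb (by norm_num) (by norm_num) (by norm_num)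
    have := hAcone 2 (by norm_num) _ h2
    convert this using 1
    rw [smul_add, smul_smul, smul_smul]
    norm_num
  have hcne : (Aᶜ : Set Y).Nonempty := by
    rw [Set.nonempty_compl]; exact hAne
  have key1 : ∀ y : Y, ∀ u ∈ A, Metric.infDist (y + u) A ≤ Metric.infDist y A := by
    intro y u hu
    refine le_infDist_aux hne fun a ha => ?_
    have : Metric.infDist (y + u) A ≤ dist (y + u) (a + u) :=
      Metric.infDist_le_dist_of_mem (hadd a ha u hu)
    simpa [dist_eq_norm, add_sub_add_right_eq_sub] using this
  have key2 : ∀ y : Y, ∀ u ∈ A, Metric.infDist y Aᶜ ≤ Metric.infDist (y + u) Aᶜ := by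
    intro y u hu
    refine le_infDist_aux hcne fun c hc => ?_
    have hc' : c - u ∈ Aᶜ := by
      intro hmem
      exact hc (by simpa using hadd _ hmem u hu)
    have h1 : Metric.infDist y Aᶜ ≤ dist y (c - u) := Metric.infDist_le_dist_of_mem hc'
    have heq : dist y (c - u) = dist (y + u) c := by
      rw [dist_eq_norm, dist_eq_norm]
      congr 1
      abel
    linarith
  have part1 : ∀ y₁ y₂ : Y, y₁ - y₂ ∈ A →
      Metric.infDist y₁ A - Metric.infDist y₁ Aᶜ ≤
        Metric.infDist y₂ A - Metric.infDist y₂ Aᶜ := by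
    intro y₁ y₂ hu
    have hy : y₂ + (y₁ - y₂) = y₁ := by abel
    have h1 := key1 y₂ _ hu
    have h2 := key2 y₂ _ hu
    rw [hy] at h1 h2
    linarith
  refine ⟨part1, fun _ y₁ y₂ hu => ?_⟩
  set u := y₁ - y₂ with hu_def
  have huA : u ∈ A := interior_subset hu
  have hy : y₁ = y₂ + u := by rw [hu_def]; abel
  obtain ⟨δ, hδ, hball⟩ := Metric.isOpen_iff.1 isOpen_interior u hu
  have hballA : Metric.ball u δ ⊆ A := fun x hx => interior_subset (hball hx)
  by_cases hy2 : y₂ ∈ A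
  · -- Case 1: y₂ ∈ A, so y₁ ∈ A, and ball y₁ (d₂ + δ) ⊆ A
    have hy1 : y₁ ∈ A := hy ▸ hadd y₂ hy2 u huA
    set d₂ := Metric.infDist y₂ Aᶜ with hd2
    have hd2nn : 0 ≤ d₂ := Metric.infDist_nonneg
    have hpos : 0 < d₂ + δ := by linarith
    have hballsub : Metric.ball y₁ (d₂ + δ) ⊆ A := by
      intro x hx
      rw [Metric.mem_ball, dist_comm, dist_eq_norm] at hx
      set v := y₁ - x with hv
      set t := d₂ / (d₂ + δ) with ht
      have ht0 : 0 ≤ t := div_nonneg hd2nn hpos.le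
      have ht1 : t < 1 := (div_lt_one hpos).2 (by linarith)
      have htmul : t * (d₂ + δ) = d₂ := div_mul_cancel₀ _ hpos.ne'
      have hv1 : y₂ - t • v ∈ A := by
        rcases eq_or_lt_of_le hd2nn with h0 | h0
        · have ht' : t = 0 := by rw [ht, ← h0, zero_div]
          simpa [ht'] using hy2
        · have htpos : 0 < t := div_pos h0 hpos
          have hnorm : ‖t • v‖ < d₂ := by
            rw [norm_smul, Real.norm_eq_abs, abs_of_nonneg ht0, ← htmul]
            exact mul_lt_mul_of_pos_left hx htpos
          have : dist y₂ (y₂ - t • v) < Metric.infDist y₂ Aᶜ := by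
            rw [dist_eq_norm]
            simpa using hnorm
          have := Metric.notMem_of_dist_lt_infDist this
          simpa using this
      have hv2 : u - (1 - t) • v ∈ A := by
        apply hballA
        rw [Metric.mem_ball, dist_comm, dist_eq_norm]
        have : ‖(1 - t) • v‖ < δ := by
          rw [norm_smul, Real.norm_eq_abs, abs_of_nonneg (by linarith)]
          have h1t : 0 < 1 - t := by linarith
          have := mul_lt_mul_of_pos_left hx h1t
          nlinarith
        simpa using this
      have hx' : (y₂ - t • v) + (u - (1 - t) • v) = x := by
        have hsum : t • v + (1 - t) • v = v := by
          rw [← add_smul]; simp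
        have heq : (y₂ - t • v) + (u - (1 - t) • v) = (y₂ + u) - (t • v + (1 - t) • v) := by
          abel
        rw [heq, hsum, ← hy, hv]
        abel
      exact hx' ▸ hadd _ hv1 _ hv2
    have hge : d₂ + δ ≤ Metric.infDist y₁ Aᶜ := by
      refine le_infDist_aux hcne fun c hc => ?_
      by_contra hlt
      push_neg at hlt
      exact hc (hballsub (by rwa [Metric.mem_ball, dist_comm]))
    have h1 : Metric.infDist y₁ A = 0 := Metric.infDist_zero_of_mem hy1
    have h2 : Metric.infDist y₂ A = 0 := Metric.infDist_zero_of_mem hy2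
    rw [h1, h2]
    linarith
  · -- Case 2: y₂ ∉ A
    have hd2c : Metric.infDist y₂ Aᶜ = 0 := Metric.infDist_zero_of_mem hy2
    have hd2pos : 0 < Metric.infDist y₂ A :=
      (hAclosed.notMem_iff_infDist_pos hne).1 hy2
    by_cases hy1 : y₁ ∈ A
    · have h1 : Metric.infDist y₁ A = 0 := Metric.infDist_zero_of_mem hy1
      have h2 : 0 ≤ Metric.infDist y₁ Aᶜ := Metric.infDist_nonneg
      rw [h1, hd2c]
      linarith
    · have hd1c : Metric.infDist y₁ Aᶜ = 0 := Metric.infDist_zero_of_mem hy1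
      rw [hd1c, hd2c]
      have hkey : Metric.infDist y₁ A + δ ≤ Metric.infDist y₂ A := by
        refine le_infDist_aux hne fun a ha => ?_
        set v := y₂ - a with hv
        have hvnorm : δ ≤ ‖v‖ := by
          by_contra hlt
          push_neg at hlt
          apply hy1
          have : u + v ∈ A := by
            apply hballA
            rw [Metric.mem_ball, dist_comm, dist_eq_norm]
            simpa using hlt
          have := hadd a ha _ this
          have heq : a + (u + v) = y₁ := by rw [hy, hv]; abel
          rwa [heq] at this
        have hvne : v ≠ 0 := by
          intro h0
          rw [h0, norm_zero] at hvnorm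
          linarith
        have hvpos : 0 < ‖v‖ := norm_pos_iff.2 hvne
        have step : ∀ s : ℝ, 0 < s → s < δ → Metric.infDist y₁ A ≤ ‖v‖ - s := by
          intro s hs hsδ
          have hsv : s ≤ ‖v‖ := le_trans hsδ.le hvnorm
          have hwball : u + (s * ‖v‖⁻¹) • v ∈ A := by
            apply hballA
            rw [Metric.mem_ball, dist_comm, dist_eq_norm]
            have : ‖(s * ‖v‖⁻¹) • v‖ = s := by
              rw [norm_smul, Real.norm_eq_abs,
                abs_of_nonneg (by positivity)]
              field_simp
            simpa [this] using hsδ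
          have hxA : a + (u + (s * ‖v‖⁻¹) • v) ∈ A := hadd a ha _ hwball
          have hdist : dist y₁ (a + (u + (s * ‖v‖⁻¹) • v)) = ‖v‖ - s := by
            rw [dist_eq_norm]
            have heq : y₁ - (a + (u + (s * ‖v‖⁻¹) • v)) = (1 - s * ‖v‖⁻¹) • v := by
              rw [hy, sub_smul, one_smul, hv]
              abel
            rw [heq, norm_smul, Real.norm_eq_abs]
            have h1 : s * ‖v‖⁻¹ ≤ 1 := by
              rw [← div_eq_mul_inv, div_le_one hvpos]
              exact hsv
            rw [abs_of_nonneg (by linarith), sub_mul, one_mul, mul_assoc,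
              inv_mul_cancel₀ hvpos.ne', mul_one]
          calc Metric.infDist y₁ A ≤ dist y₁ (a + (u + (s * ‖v‖⁻¹) • v)) :=
                Metric.infDist_le_dist_of_mem hxA
            _ = ‖v‖ - s := hdist
        have hbase : Metric.infDist y₁ A ≤ ‖v‖ - δ/2 := step (δ/2) (by linarith) (by linarith)
        have hfinal : Metric.infDist y₁ A + δ ≤ ‖v‖ := by
          by_contra hcon
          push_neg at hcon
          set x := ‖v‖ - Metric.infDist y₁ A with hx
          have hx1 : δ/2 ≤ x := by rw [hx]; linarith
          have hx2 : x < δ := by rw [hx]; linarith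
          have := step ((δ + x)/2) (by linarith) (by linarith)
          rw [hx] at this
          linarith
        have : dist y₂ a = ‖v‖ := by rw [dist_eq_norm, hv]
        linarith
      linarith
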